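/- Let n ≥ 2, ν > 0 and a ∈ ℝ∖{0}. The Gaussian density p_∞(z) = (4πν)^{−n} exp(−|z|²/(4ν)) on ℝ^{2n} satisfies the stationary Fokker–Planck identity ν Δ p_∞(z) − Σᵢ a (Σ_{j≠i} K(zⁱ−zʲ)) · ∇_{zⁱ} p_∞(z) + (1/2) ∇_z · (z p_∞(z)) = 0 at every z ∈ ℝ^{2n} with pairwise distinct components zⁱ. -/

import Mathlib

open Finset

/-- The Biot and Savart kernel `K(x) = x^⊥ / (2π|x|²)` on `ℝ² \ {0}`. -/
noncomputable def biotSavart (x : EuclideanSpace ℝ (Fin 2)) : EuclideanSpace ℝ (Fin 2) :=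
  (2 * Real.pi * ‖x‖ ^ 2)⁻¹ • (WithLp.equiv 2 (Fin 2 → ℝ)).symm ![-(x 1), x 0]

/-- Configuration space of `n` planar vortices. -/
abbrev Conf (n : ℕ) := Fin n → EuclideanSpace ℝ (Fin 2)

/-- Partial derivative of `f` at `z` in direction `d`. -/
noncomputable def pderiv {n : ℕ} (f : Conf n → ℝ) (d : Conf n) (z : Conf n) : ℝ :=
  fderiv ℝ f z d

/-- Second partial derivative of `f` at `z` in direction `d` (twice). -/
noncomputable def pderiv2 {n : ℕ} (f : Conf n → ℝ) (d : Conf n) (z : Conf n) : ℝ :=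
  fderiv ℝ (fun y => fderiv ℝ f y d) z d

/-- Unit direction moving the `k`-th coordinate of the `i`-th particle. -/
noncomputable def dir {n : ℕ} (i : Fin n) (k : Fin 2) : Conf n :=
  Function.update (0 : Conf n) i (EuclideanSpace.single k 1)

noncomputable def SD {n : ℕ} (y : Conf n) : Conf n →L[ℝ] ℝ :=
  ∑ j, (2:ℕ) • ((innerSL ℝ (y j)).comp (ContinuousLinearMap.proj j))

lemma hasFDerivAt_Sfun {n : ℕ} (y : Conf n) :
    HasFDerivAt (fun y : Conf n => ∑ i, ‖y i‖ ^ 2) (SD y) y := by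
  apply HasFDerivAt.fun_sum
  intro j _
  exact ((ContinuousLinearMap.proj j).hasFDerivAt (x := y)).norm_sq

lemma SD_apply {n : ℕ} (y : Conf n) (i : Fin n) (k : Fin 2) :
    SD y (dir i k) = 2 * y i k := by
  simp only [SD, two_smul, ContinuousLinearMap.sum_apply, ContinuousLinearMap.add_apply,
    ContinuousLinearMap.comp_apply, ContinuousLinearMap.proj_apply]
  rw [Finset.sum_eq_single i]
  · simp [dir, real_inner_comm, EuclideanSpace.inner_single_left, EuclideanSpace.inner_single_right]; ring
  · intro j _ hj
    simp [dir, Function.update_of_ne hj]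
  · simp

lemma hasFDerivAt_gauss {n : ℕ} (ν C : ℝ) (y : Conf n) :
    HasFDerivAt (fun y : Conf n => C * Real.exp (-(∑ i, ‖y i‖ ^ 2) / (4 * ν)))
      ((C * Real.exp (-(∑ i, ‖y i‖ ^ 2) / (4 * ν)) * (-(4 * ν)⁻¹)) • SD y) y := by
  have h1 : HasFDerivAt (fun y : Conf n => -(∑ i, ‖y i‖ ^ 2) / (4 * ν))
      ((-(4 * ν)⁻¹) • SD y) y := by
    have h := ((hasFDerivAt_Sfun y).neg).const_mul ((4 * ν)⁻¹)
    have heq : (fun y : Conf n => -(∑ i, ‖y i‖ ^ 2) / (4 * ν))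
        = fun y : Conf n => (4 * ν)⁻¹ * (-(∑ i, ‖y i‖ ^ 2)) := by
      funext w; ring
    rw [heq]
    have e : (-(4 * ν)⁻¹) • SD y = (4 * ν)⁻¹ • -SD y := by ext d; simp
    rw [e]; exact h
  have h2 := (h1.exp).const_mul C
  have e : (C * Real.exp (-(∑ i, ‖y i‖ ^ 2) / (4 * ν)) * (-(4 * ν)⁻¹)) • SD y
      = C • Real.exp (-(∑ i, ‖y i‖ ^ 2) / (4 * ν)) • (-(4 * ν)⁻¹) • SD y := by
    rw [smul_smul, smul_smul]
  rw [e]; exact h2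

lemma fderiv_gauss_apply {n : ℕ} (ν C : ℝ) (hν : ν ≠ 0) (y : Conf n) (i : Fin n) (k : Fin 2) :
    fderiv ℝ (fun y : Conf n => C * Real.exp (-(∑ i, ‖y i‖ ^ 2) / (4 * ν))) y (dir i k)
      = -(2 * ν)⁻¹ * y i k * (C * Real.exp (-(∑ i, ‖y i‖ ^ 2) / (4 * ν))) := by
  rw [(hasFDerivAt_gauss ν C y).fderiv]
  simp only [ContinuousLinearMap.smul_apply, SD_apply, smul_eq_mul]
  field_simp
  ring

lemma hasFDerivAt_coord {n : ℕ} (i : Fin n) (k : Fin 2) (y : Conf n) :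
    HasFDerivAt (fun y : Conf n => y i k)
      ((EuclideanSpace.proj (𝕜 := ℝ) k).comp (ContinuousLinearMap.proj i)) y := by
  have h := ((EuclideanSpace.proj (𝕜 := ℝ) k).comp
    (ContinuousLinearMap.proj (R := ℝ) (φ := fun _ : Fin n => EuclideanSpace ℝ (Fin 2))
      i)).hasFDerivAt (x := y)
  exact h

lemma coord_dir {n : ℕ} (i : Fin n) (k : Fin 2) :
    ((EuclideanSpace.proj (𝕜 := ℝ) k).comp (ContinuousLinearMap.proj i)) (dir i k) = 1 := by
  simp [dir]

lemma pderiv2_gauss {n : ℕ} (ν C : ℝ) (hν : ν ≠ 0) (z : Conf n) (i : Fin n) (k : Fin 2) :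
    fderiv ℝ (fun y => fderiv ℝ
        (fun y : Conf n => C * Real.exp (-(∑ i, ‖y i‖ ^ 2) / (4 * ν))) y (dir i k)) z (dir i k)
      = (C * Real.exp (-(∑ i, ‖z i‖ ^ 2) / (4 * ν)))
          * ((z i k) ^ 2 / (2 * ν) ^ 2 - (2 * ν)⁻¹) := by
  have heq : (fun y => fderiv ℝ
        (fun y : Conf n => C * Real.exp (-(∑ i, ‖y i‖ ^ 2) / (4 * ν))) y (dir i k))
      = fun y : Conf n => (-(2 * ν)⁻¹ * y i k)
          * (C * Real.exp (-(∑ i, ‖y i‖ ^ 2) / (4 * ν))) := by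
    funext w
    rw [fderiv_gauss_apply ν C hν w i k]
  rw [heq]
  have hc := (hasFDerivAt_coord i k z).const_mul (-(2 * ν)⁻¹)
  have h := hc.fun_mul (hasFDerivAt_gauss ν C z)
  rw [h.fderiv]
  simp only [ContinuousLinearMap.add_apply, ContinuousLinearMap.smul_apply,
    ContinuousLinearMap.coe_smul', Pi.smul_apply, SD_apply, coord_dir, smul_eq_mul]
  field_simp
  ring

lemma pderiv_divterm {n : ℕ} (ν C : ℝ) (hν : ν ≠ 0) (z : Conf n) (i : Fin n) (k : Fin 2) :
    fderiv ℝ (fun y : Conf n =>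
        y i k * (C * Real.exp (-(∑ i, ‖y i‖ ^ 2) / (4 * ν)))) z (dir i k)
      = (C * Real.exp (-(∑ i, ‖z i‖ ^ 2) / (4 * ν))) * (1 - (z i k) ^ 2 / (2 * ν)) := by
  have h := (hasFDerivAt_coord i k z).fun_mul (hasFDerivAt_gauss ν C z)
  rw [h.fderiv]
  simp only [ContinuousLinearMap.add_apply, ContinuousLinearMap.smul_apply,
    ContinuousLinearMap.coe_smul', Pi.smul_apply, SD_apply, coord_dir, smul_eq_mul]
  field_simp
  ring

lemma biot_pair (x y : EuclideanSpace ℝ (Fin 2)) :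
    (∑ k : Fin 2, biotSavart (x - y) k * x k)
      + (∑ k : Fin 2, biotSavart (y - x) k * y k) = 0 := by
  have hxy : ‖y - x‖ = ‖x - y‖ := norm_sub_rev _ _
  simp only [biotSavart, Fin.sum_univ_two, PiLp.smul_apply, WithLp.equiv_symm_apply, PiLp.toLp_apply,
    Matrix.cons_val_zero, Matrix.cons_val_one, Matrix.head_cons, smul_eq_mul,
    PiLp.sub_apply, hxy]
  ring

lemma drift_zero {n : ℕ} (z : Conf n) :
    ∑ i, ∑ j ∈ univ.filter (· ≠ i), (∑ k : Fin 2, biotSavart (z i - z j) k * z i k) = 0 := by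
  set T : Fin n → Fin n → ℝ := fun i j => ∑ k : Fin 2, biotSavart (z i - z j) k * z i k with hT
  have hanti : ∀ i j : Fin n, T j i = -T i j := by
    intro i j
    have := biot_pair (z i) (z j)
    simp only [hT]
    linarith
  have key : ∀ i : Fin n, ∑ j ∈ univ.filter (· ≠ i), T i j
      = ∑ j, if j ≠ i then T i j else 0 := by
    intro i; rw [Finset.sum_filter]
  simp only [key]
  set S := ∑ i : Fin n, ∑ j : Fin n, if j ≠ i then T i j else 0 with hS
  have hswap : S = ∑ j : Fin n, ∑ i : Fin n, if j ≠ i then T i j else 0 := Finset.sum_comm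
  have hneg : S + S = 0 := by
    nth_rewrite 2 [hswap]
    nth_rewrite 1 [hS]
    rw [← Finset.sum_add_distrib]
    refine Finset.sum_eq_zero fun x _ => ?_
    rw [← Finset.sum_add_distrib]
    refine Finset.sum_eq_zero fun y _ => ?_
    by_cases h : y = x
    · simp [h]
    · simp [h, Ne.symm h, hanti x y]
  have hfin : ∑ i, ∑ j ∈ univ.filter (· ≠ i), T i j = 0 := by simp only [key]; linarith
  exact hfin
/-- The Gaussian density `p_∞(z) = (4πν)^{-n} exp(-|z|²/(4ν))` satisfies the stationary
Fokker–Planck identity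
`ν Δ p_∞ - ∑ᵢ a (∑_{j≠i} K(zⁱ-zʲ)) · ∇_{zⁱ} p_∞ + (1/2) ∇_z · (z p_∞) = 0`
at every configuration with pairwise distinct components. -/
theorem gaussian_stationary_fokker_planck (n : ℕ) (hn : 2 ≤ n) (ν a : ℝ) (hν : 0 < ν)
    (ha : a ≠ 0) (pinf : Conf n → ℝ)
    (hpinf : pinf = fun y => ((4 * Real.pi * ν) ^ n)⁻¹ *
      Real.exp (-(∑ i : Fin n, ‖y i‖ ^ 2) / (4 * ν)))
    (z : Conf n) (hz : ∀ i j, i ≠ j → z i ≠ z j) :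
    ν * (∑ i : Fin n, ∑ k : Fin 2, pderiv2 pinf (dir i k) z)
      - (∑ i : Fin n, ∑ k : Fin 2,
          a * (∑ j ∈ univ.filter (· ≠ i), biotSavart (z i - z j) k)
            * pderiv pinf (dir i k) z)
      + (1 / 2) * (∑ i : Fin n, ∑ k : Fin 2,
          pderiv (fun y => y i k * pinf y) (dir i k) z)
    = 0 := by
  subst hpinf
  simp only [pderiv, pderiv2]
  beta_reduce
  have hν' : ν ≠ 0 := ne_of_gt hν
  set C : ℝ := ((4 * Real.pi * ν) ^ n)⁻¹ with hC
  set P : ℝ := C * Real.exp (-(∑ i : Fin n, ‖z i‖ ^ 2) / (4 * ν)) with hP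
  have hp1 : ∀ (i : Fin n) (k : Fin 2),
      fderiv ℝ (fun y : Conf n => C * Real.exp (-(∑ i, ‖y i‖ ^ 2) / (4 * ν))) z (dir i k)
        = -(2 * ν)⁻¹ * z i k * P := fun i k => fderiv_gauss_apply ν C hν' z i k
  have hp2 : ∀ (i : Fin n) (k : Fin 2),
      fderiv ℝ (fun y => fderiv ℝ
          (fun y : Conf n => C * Real.exp (-(∑ i, ‖y i‖ ^ 2) / (4 * ν))) y (dir i k)) z (dir i k)
        = P * ((z i k) ^ 2 / (2 * ν) ^ 2 - (2 * ν)⁻¹) :=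
    fun i k => pderiv2_gauss ν C hν' z i k
  have hp3 : ∀ (i : Fin n) (k : Fin 2),
      fderiv ℝ (fun y : Conf n =>
          y i k * (C * Real.exp (-(∑ i, ‖y i‖ ^ 2) / (4 * ν)))) z (dir i k)
        = P * (1 - (z i k) ^ 2 / (2 * ν)) := fun i k => pderiv_divterm ν C hν' z i k
  simp only [hp1, hp2, hp3]
  have hB : ∑ i : Fin n, ∑ k : Fin 2,
      a * (∑ j ∈ univ.filter (· ≠ i), biotSavart (z i - z j) k) * (-(2 * ν)⁻¹ * z i k * P)
      = 0 := by
    have hterm : ∀ (i : Fin n) (k : Fin 2),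
        a * (∑ j ∈ univ.filter (· ≠ i), biotSavart (z i - z j) k) * (-(2 * ν)⁻¹ * z i k * P)
          = (-(a * (2 * ν)⁻¹ * P))
              * ∑ j ∈ univ.filter (· ≠ i), biotSavart (z i - z j) k * z i k := by
      intro i k
      rw [← Finset.sum_mul]
      ring
    simp only [hterm]
    simp only [← Finset.mul_sum]
    have hswap2 : ∀ i : Fin n,
        ∑ k : Fin 2, ∑ j ∈ univ.filter (· ≠ i), biotSavart (z i - z j) k * z i k
          = ∑ j ∈ univ.filter (· ≠ i), ∑ k : Fin 2, biotSavart (z i - z j) k * z i k :=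
      fun i => Finset.sum_comm
    simp only [hswap2]
    rw [drift_zero z, mul_zero]
  rw [hB, sub_zero]
  simp only [Finset.mul_sum, ← Finset.sum_add_distrib]
  refine Finset.sum_eq_zero fun i _ => Finset.sum_eq_zero fun k _ => ?_
  field_simp
  ring
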